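/- For every integer s and every n ≥ 1, gcd(f_n(s,-1), g_n(s,-1)) divides 2. -/

import Mathlib

/-- Generalized Fibonacci sequence: f 0 = 0, f 1 = 1, f (n+2) = s * f (n+1) + t * f n. -/
def genFib (s t : ℤ) : ℕ → ℤ
  | 0 => 0
  | 1 => 1
  | n + 2 => s * genFib s t (n + 1) + t * genFib s t n

/-- Generalized Lucas sequence for t = -1: g 0 = 2, g 1 = s, g (n+2) = s * g (n+1) - g n. -/
def genLucas (s : ℤ) : ℕ → ℤ
  | 0 => 2
  | 1 => s
  | n + 2 => s * genLucas s (n + 1) - genLucas s n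

lemma lucas_eq_fib (s : ℤ) : ∀ n : ℕ,
    genLucas s n = 2 * genFib s (-1) (n + 1) - s * genFib s (-1) n
  | 0 => by simp [genLucas, genFib]
  | 1 => by simp [genLucas, genFib]; ring
  | n + 2 => by
    have h1 := lucas_eq_fib s (n + 1)
    have h0 := lucas_eq_fib s n
    show s * genLucas s (n + 1) - genLucas s n = _
    rw [h1, h0, show n + 2 + 1 = (n + 1) + 2 from rfl,
      show genFib s (-1) ((n+1)+2) = s * genFib s (-1) (n+2) + (-1) * genFib s (-1) (n+1) from rfl,
      show genFib s (-1) (n+2) = s * genFib s (-1) (n+1) + (-1) * genFib s (-1) n from rfl]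
    ring

lemma fib_identity (s : ℤ) : ∀ n : ℕ,
    (genFib s (-1) (n+1) - s * genFib s (-1) n) * genFib s (-1) (n+1)
      + genFib s (-1) n * genFib s (-1) n = 1
  | 0 => by simp [genFib]
  | n + 1 => by
    have h := fib_identity s n
    rw [show genFib s (-1) ((n+1)+1) = s * genFib s (-1) (n+1) + (-1) * genFib s (-1) n from rfl]
    nlinarith [h]

/-- gcd(f_n(s,-1), g_n(s,-1)) divides 2. -/
theorem gcd_fib_lucas_dvd_two (s : ℤ) (n : ℕ) (hn : 1 ≤ n) :
    Int.gcd (genFib s (-1) n) (genLucas s n) ∣ 2 := by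
  set f := genFib s (-1) n
  set f' := genFib s (-1) (n + 1)
  set d : ℤ := (Int.gcd f (genLucas s n) : ℤ)
  have hdf : d ∣ f := Int.gcd_dvd_left _ _
  have hdg : d ∣ genLucas s n := Int.gcd_dvd_right _ _
  have hdf' : d ∣ 2 * f' := by
    have := lucas_eq_fib s n
    have : 2 * f' = genLucas s n + s * f := by rw [this]; ring
    rw [this]
    exact dvd_add hdg (Dvd.dvd.mul_left hdf s)
  have key : d ∣ 2 := by
    have hid := fib_identity s n
    have : (2 : ℤ) = (f' - s * f) * (2 * f') + f * (2 * f) := by linarith [hid]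
    rw [this]
    exact dvd_add (Dvd.dvd.mul_left hdf' _) (Dvd.dvd.mul_left (Dvd.dvd.mul_left hdf 2) f)
  exact Int.ofNat_dvd_right.mp key
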